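/- For positive definite A and B, the squared Bures-Wasserstein distance is nonnegative: tr(A) + tr(B) ≥ 2 tr((A^{1/2}BA^{1/2})^{1/2}), with equality if and only if A = B. -/

import Mathlib

open Matrix Filter Asymptotics
open scoped ComplexOrder

/-- The PSD square root of a matrix (0 if not PSD). -/
noncomputable def msqrt {n : ℕ} (M : Matrix (Fin n) (Fin n) ℂ) : Matrix (Fin n) (Fin n) ℂ :=
  letI := Classical.propDecidable M.PosSemidef
  if h : M.PosSemidef then (h.1.eigenvectorUnitary : Matrix (Fin n) (Fin n) ℂ) *
    diagonal ((↑) ∘ (√·) ∘ h.1.eigenvalues) * (star h.1.eigenvectorUnitary : Matrix (Fin n) (Fin n) ℂ) else 0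

/-- `(AB)^{1/2} := A^{1/2} (A^{1/2} B A^{1/2})^{1/2} A^{-1/2}`. -/
noncomputable def sqAB {n : ℕ} (A B : Matrix (Fin n) (Fin n) ℂ) : Matrix (Fin n) (Fin n) ℂ :=
  msqrt A * msqrt (msqrt A * B * msqrt A) * (msqrt A)⁻¹

/-- Bures-Wasserstein geodesic `A ◇_t B`. -/
noncomputable def geo {n : ℕ} (A B : Matrix (Fin n) (Fin n) ℂ) (t : ℝ) : Matrix (Fin n) (Fin n) ℂ :=
  ((1 - t)^2 : ℝ) • A + (t^2 : ℝ) • B + (t * (1 - t) : ℝ) • (sqAB A B + (sqAB A B)ᴴ)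

/-- Bures-Wasserstein distance. -/
noncomputable def dBW {n : ℕ} (A B : Matrix (Fin n) (Fin n) ℂ) : ℝ :=
  Real.sqrt ((Matrix.trace A).re + (Matrix.trace B).re -
    2 * (Matrix.trace (msqrt (msqrt A * B * msqrt A))).re)

/-- The PSD square root, given by the spectral theorem. -/
noncomputable def Matrix.PosSemidef.sqrt {n : ℕ} {M : Matrix (Fin n) (Fin n) ℂ}
    (h : M.PosSemidef) : Matrix (Fin n) (Fin n) ℂ :=
  (h.1.eigenvectorUnitary : Matrix (Fin n) (Fin n) ℂ) *
    diagonal ((↑) ∘ (√·) ∘ h.1.eigenvalues) * (star h.1.eigenvectorUnitary : Matrix (Fin n) (Fin n) ℂ)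

open scoped MatrixOrder in
lemma Matrix.PosSemidef.sqrt_eq_cfcSqrt {n : ℕ} {M : Matrix (Fin n) (Fin n) ℂ}
    (h : M.PosSemidef) : h.sqrt = CFC.sqrt M := by
  rw [CFC.sqrt_eq_cfc, cfc_nnreal_eq_real _ M, h.1.cfc_eq, IsHermitian.cfc, Unitary.conjStarAlgAut_apply,
    Matrix.PosSemidef.sqrt]
  congr 3
  funext i
  simp only [Function.comp_apply, Real.coe_sqrt, Real.coe_toNNReal']
  congr 1
  rw [max_eq_left (h.eigenvalues_nonneg i)]
  rfl

open scoped MatrixOrder in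
lemma Matrix.PosSemidef.posSemidef_sqrt {n : ℕ} {M : Matrix (Fin n) (Fin n) ℂ}
    (h : M.PosSemidef) : h.sqrt.PosSemidef := by
  rw [h.sqrt_eq_cfcSqrt]
  exact (CFC.sqrt_nonneg M).posSemidef

open scoped MatrixOrder in
lemma Matrix.PosSemidef.sqrt_mul_self {n : ℕ} {M : Matrix (Fin n) (Fin n) ℂ}
    (h : M.PosSemidef) : h.sqrt * h.sqrt = M := by
  rw [h.sqrt_eq_cfcSqrt]
  exact CFC.sqrt_mul_sqrt_self M h.nonneg

open scoped MatrixOrder in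
lemma Matrix.PosSemidef.eq_sqrt_of_sq_eq {n : ℕ} {A : Matrix (Fin n) (Fin n) ℂ}
    (hA : A.PosSemidef) {B : Matrix (Fin n) (Fin n) ℂ} (hB : B.PosSemidef) (hAB : A ^ 2 = B) :
    A = hB.sqrt := by
  rw [hB.sqrt_eq_cfcSqrt]
  exact (CFC.sqrt_unique (by rw [← sq]; exact hAB) hA.nonneg).symm

lemma msqrt_eq {n : ℕ} {M : Matrix (Fin n) (Fin n) ℂ} (h : M.PosSemidef) :
    msqrt M = h.sqrt := by
  rw [msqrt, dif_pos h]
  rfl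

lemma trace_re_eq {n : ℕ} (D : Matrix (Fin n) (Fin n) ℂ) :
    (Matrix.trace (Dᴴ * D)).re = ∑ i, ∑ j, Complex.normSq (D j i) := by
  have : Matrix.trace (Dᴴ * D) = ∑ i, ∑ j, ((Complex.normSq (D j i) : ℝ) : ℂ) := by
    simp only [Matrix.trace, Matrix.diag, Matrix.mul_apply, Matrix.conjTranspose_apply]
    refine Finset.sum_congr rfl fun i _ => Finset.sum_congr rfl fun j _ => ?_
    rw [Complex.normSq_eq_conj_mul_self]
    rfl
  rw [this]
  push_cast [Complex.re_sum]
  simp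

lemma trace_re_nonneg' {n : ℕ} (D : Matrix (Fin n) (Fin n) ℂ) :
    0 ≤ (Matrix.trace (Dᴴ * D)).re := by
  rw [trace_re_eq]
  exact Finset.sum_nonneg fun i _ => Finset.sum_nonneg fun j _ => Complex.normSq_nonneg _

lemma eq_zero_of_trace_re {n : ℕ} (D : Matrix (Fin n) (Fin n) ℂ)
    (h : (Matrix.trace (Dᴴ * D)).re = 0) : D = 0 := by
  rw [trace_re_eq] at h
  ext i j
  have h1 : ∀ i ∈ Finset.univ, (0:ℝ) ≤ ∑ j, Complex.normSq (D j i) :=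
    fun i _ => Finset.sum_nonneg fun j _ => Complex.normSq_nonneg _
  have h2 := (Finset.sum_eq_zero_iff_of_nonneg h1).1 h
  have h3 := (Finset.sum_eq_zero_iff_of_nonneg
    (fun k (_ : k ∈ Finset.univ) => Complex.normSq_nonneg (D k j))).1 (h2 j (Finset.mem_univ j))
  have := h3 i (Finset.mem_univ i)
  simpa [Complex.normSq_eq_zero] using this

theorem stmt17 {n : ℕ} (A B : Matrix (Fin n) (Fin n) ℂ)
    (hA : A.PosDef) (hB : B.PosDef) :
    2 * (Matrix.trace (msqrt (msqrt A * B * msqrt A))).re ≤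
        (Matrix.trace A).re + (Matrix.trace B).re ∧
    ((Matrix.trace A).re + (Matrix.trace B).re =
        2 * (Matrix.trace (msqrt (msqrt A * B * msqrt A))).re ↔ A = B) := by
  classical
  set S := hA.posSemidef.sqrt with hSdef
  have hmA : msqrt A = S := msqrt_eq hA.posSemidef
  have hS : S.PosSemidef := hA.posSemidef.posSemidef_sqrt
  have hSH : Sᴴ = S := hS.1
  have hSS : S * S = A := hA.posSemidef.sqrt_mul_self
  have hdetS : IsUnit S.det := by
    have h1 : S.det * S.det = A.det := by rw [← Matrix.det_mul, hSS]
    have h2 : A.det ≠ 0 := ne_of_gt hA.det_pos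
    exact isUnit_iff_ne_zero.2 (fun h => h2 (by rw [← h1, h, mul_zero]))
  have hM : (S * B * S).PosDef := by
    refine Matrix.PosDef.of_dotProduct_mulVec_pos ?_ ?_
    · have := Matrix.isHermitian_conjTranspose_mul_mul S hB.1
      rwa [hSH] at this
    · intro x hx
      have hx' : S *ᵥ x ≠ 0 := by
        intro h
        exact hx (Matrix.mulVec_injective_iff_isUnit.2 (Matrix.isUnit_iff_isUnit_det S |>.2 hdetS)
          (by simpa using h))
      have h0 := hB.dotProduct_mulVec_pos hx'
      have hMrw : S * B * S = Sᴴ * B * S := by rw [hSH]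
      rw [hMrw]
      simpa only [star_mulVec, dotProduct_mulVec, vecMul_vecMul] using h0
  set C := hM.posSemidef.sqrt with hCdef
  have hmM : msqrt (S * B * S) = C := msqrt_eq hM.posSemidef
  have hC : C.PosSemidef := hM.posSemidef.posSemidef_sqrt
  have hCH : Cᴴ = C := hC.1
  have hCC : C * C = S * B * S := hM.posSemidef.sqrt_mul_self
  have hdetC : IsUnit C.det := by
    have h1 : C.det * C.det = (S * B * S).det := by rw [← Matrix.det_mul, hCC]
    have h2 : (S * B * S).det ≠ 0 := ne_of_gt hM.det_pos
    exact isUnit_iff_ne_zero.2 (fun h => h2 (by rw [← h1, h, mul_zero]))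
  have hCiC : C⁻¹ * C = 1 := Matrix.nonsing_inv_mul C hdetC
  have hCCi : C * C⁻¹ = 1 := Matrix.mul_nonsing_inv C hdetC
  have hCiH : (C⁻¹)ᴴ = C⁻¹ := by rw [Matrix.conjTranspose_nonsing_inv, hCH]
  set R := hB.posSemidef.sqrt with hRdef
  have hR : R.PosSemidef := hB.posSemidef.posSemidef_sqrt
  have hRH : Rᴴ = R := hR.1
  have hRR : R * R = B := hB.posSemidef.sqrt_mul_self
  set U := R * S * C⁻¹ with hUdef
  have hUH : Uᴴ = C⁻¹ * (S * R) := by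
    rw [hUdef]
    simp only [Matrix.conjTranspose_mul, hCiH, hSH, hRH, Matrix.mul_assoc]
  have hSRRS : S * (R * (R * S)) = C * C := by
    rw [← Matrix.mul_assoc R R S, hRR, hCC, Matrix.mul_assoc]
  have key1 : Uᴴ * (R * S) = C := by
    rw [hUH]
    calc C⁻¹ * (S * R) * (R * S) = C⁻¹ * (S * (R * (R * S))) := by
          simp only [Matrix.mul_assoc]
      _ = C⁻¹ * (C * C) := by rw [hSRRS]
      _ = C := by rw [← Matrix.mul_assoc, hCiC, Matrix.one_mul]
  have hUU : Uᴴ * U = 1 := by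
    rw [hUH, hUdef]
    calc C⁻¹ * (S * R) * (R * S * C⁻¹) = C⁻¹ * (S * (R * (R * S))) * C⁻¹ := by
          simp only [Matrix.mul_assoc]
      _ = C⁻¹ * (C * C) * C⁻¹ := by rw [hSRRS]
      _ = 1 := by
          rw [← Matrix.mul_assoc, hCiC, Matrix.one_mul, hCCi]
  have hUUc : U * Uᴴ = 1 := mul_eq_one_comm.mp hUU
  have key2 : S * (R * U) = C := by
    have h := congrArg Matrix.conjTranspose key1
    rw [Matrix.conjTranspose_mul, Matrix.conjTranspose_mul, Matrix.conjTranspose_conjTranspose,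
      hSH, hRH, hCH] at h
    rw [← h, Matrix.mul_assoc]
  set D := S - R * U with hDdef
  have hDH : Dᴴ = S - Uᴴ * R := by
    rw [hDdef, Matrix.conjTranspose_sub, Matrix.conjTranspose_mul, hSH, hRH]
  have hDD : Dᴴ * D = A - C - C + Uᴴ * (B * U) := by
    rw [hDH, hDdef, Matrix.sub_mul, Matrix.mul_sub, Matrix.mul_sub]
    rw [hSS, key2]
    have h4 : Uᴴ * R * (R * U) = Uᴴ * (B * U) := by
      rw [Matrix.mul_assoc, ← Matrix.mul_assoc R R U, hRR]
    have h3 : Uᴴ * R * S = C := by rw [Matrix.mul_assoc, key1]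
    rw [h4, h3]
    abel
  have hTrBU : Matrix.trace (Uᴴ * (B * U)) = Matrix.trace B := by
    rw [← Matrix.mul_assoc, Matrix.trace_mul_cycle, hUUc, Matrix.one_mul]
  have hTr : Matrix.trace (Dᴴ * D) = Matrix.trace A + Matrix.trace B
      - Matrix.trace C - Matrix.trace C := by
    rw [hDD]
    simp only [Matrix.trace_add, Matrix.trace_sub, hTrBU]
    ring
  have hre : (Matrix.trace (Dᴴ * D)).re =
      (Matrix.trace A).re + (Matrix.trace B).re - 2 * (Matrix.trace C).re := by
    rw [hTr, Complex.sub_re, Complex.sub_re, Complex.add_re]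
    ring
  have hnn := trace_re_nonneg' D
  rw [hmA, hmM]
  constructor
  · linarith
  · constructor
    · intro heq
      have hD0 : D = 0 := eq_zero_of_trace_re D (by linarith)
      have hSRU : S = R * U := sub_eq_zero.mp (hDdef ▸ hD0)
      have hSH2 : S = Uᴴ * R := by
        have h := congrArg Matrix.conjTranspose hSRU
        rwa [hSH, Matrix.conjTranspose_mul, hRH] at h
      calc A = S * S := hSS.symm
        _ = R * U * (Uᴴ * R) := by rw [← hSRU, ← hSH2]
        _ = R * (U * Uᴴ) * R := by simp only [Matrix.mul_assoc]
        _ = B := by rw [hUUc, Matrix.mul_one, hRR]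
    · intro heq
      subst heq
      have hsq : A ^ 2 = S * A * S := by
        rw [pow_two, ← hSS]
        simp only [Matrix.mul_assoc]
      have hCA : A = C := hA.posSemidef.eq_sqrt_of_sq_eq hM.posSemidef hsq
      rw [← hCA]
      ring
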